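/- For all a, b in the probability simplex Δ^n and all scalars α ∈ R, ||a − α b||₁ ≥ (1/2)||a − b||₁. -/
import Mathlib

open Finset

/-- For `a, b` in the probability simplex and any scalar `α`,
`‖a - α b‖₁ ≥ (1/2) ‖a - b‖₁`. -/
theorem simplex_scaling_lower_bound {n : ℕ} (a b : Fin n → ℝ)
    (ha : ∀ i, 0 ≤ a i) (ha1 : ∑ i, a i = 1)
    (hb : ∀ i, 0 ≤ b i) (hb1 : ∑ i, b i = 1)
    (α : ℝ) :
    (1 / 2) * ∑ i, |a i - b i| ≤ ∑ i, |a i - α * b i| := by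
  have key : ∀ i, |a i - b i| ≤ |a i - α * b i| + |α - 1| * b i := by
    intro i
    have h : a i - b i = (a i - α * b i) + (α - 1) * b i := by ring
    rw [h]
    refine (abs_add_le _ _).trans ?_
    rw [abs_mul, abs_of_nonneg (hb i)]
  have h2 : |α - 1| ≤ ∑ i, |a i - α * b i| := by
    have h : α - 1 = -∑ i, (a i - α * b i) := by
      rw [Finset.sum_sub_distrib, ha1, ← Finset.mul_sum, hb1]; ring
    rw [h, abs_neg]
    exact Finset.abs_sum_le_sum_abs _ _
  have h1 : ∑ i, |a i - b i| ≤ (∑ i, |a i - α * b i|) + |α - 1| := by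
    calc ∑ i, |a i - b i| ≤ ∑ i, (|a i - α * b i| + |α - 1| * b i) :=
          Finset.sum_le_sum (fun i _ => key i)
      _ = (∑ i, |a i - α * b i|) + |α - 1| * ∑ i, b i := by
          rw [Finset.sum_add_distrib, ← Finset.mul_sum]
      _ = (∑ i, |a i - α * b i|) + |α - 1| := by rw [hb1, mul_one]
  linarith
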